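/- Let k be an algebraically closed field of characteristic zero. Let X₁ ⊆ 𝔸⁴ be the variety defined by the ideal (x − y², y² + z² − w³), and let C₁ = {x = y = 0}. Then C₁ ∩ X₁ = {(0,0,z,w) : z² = w³}, which is a singular curve (singular at the origin); in particular C₁ ∩ X₁ is not smooth. Moreover, the singular locus of X₁ is exactly the origin. -/
import Mathlib


open MvPolynomial

/-- Example 8.2 of Bierstone–Milman: for `X₁ = V(x − y², y² + z² − w³) ⊆ 𝔸⁴`
and `C₁ = {x = y = 0}`: `C₁ ∩ X₁ = {(0,0,z,w) : z² = w³}` is a curve singular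
at the origin (so `C₁ ∩ X₁` is not smooth), and `Sing X₁ = {0}` (expressed via
the rank of the Jacobian matrix of the two defining equations). -/
theorem example_nonsmooth_centre_intersection (k : Type) [Field k] [CharZero k]
    [IsAlgClosed k] :
    let g₁ : MvPolynomial (Fin 4) k := X 0 - X 1 ^ 2
    let g₂ : MvPolynomial (Fin 4) k := X 1 ^ 2 + X 2 ^ 2 - X 3 ^ 3
    let X₁ : Set (Fin 4 → k) := {a | eval a g₁ = 0 ∧ eval a g₂ = 0}
    -- C₁ ∩ X₁ = {(0,0,z,w) : z² = w³}
    ({a | a 0 = 0 ∧ a 1 = 0} ∩ X₁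
        = {a | a 0 = 0 ∧ a 1 = 0 ∧ (a 2) ^ 2 = (a 3) ^ 3}) ∧
    -- the curve z² = w³ is singular at the origin: the defining polynomial and
    -- all its partial derivatives vanish there, and 0 ∈ C₁ ∩ X₁
    ((0 : Fin 4 → k) ∈ {a | a 0 = 0 ∧ a 1 = 0} ∩ X₁ ∧
      eval (0 : Fin 4 → k) (X 2 ^ 2 - X 3 ^ 3 : MvPolynomial (Fin 4) k) = 0 ∧
      ∀ i : Fin 4,
        eval (0 : Fin 4 → k) (pderiv i (X 2 ^ 2 - X 3 ^ 3 : MvPolynomial (Fin 4) k))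
          = 0) ∧
    -- Sing X₁ = {0}: the points of X₁ where the Jacobian of (g₁, g₂) has rank < 2
    ({a ∈ X₁ | ∀ l l' : Fin 4,
        eval a (pderiv l g₁) * eval a (pderiv l' g₂)
          - eval a (pderiv l' g₁) * eval a (pderiv l g₂) = 0}
      = {0}) := by

  intro g₁ g₂ X₁
  have hg₁ : ∀ a : Fin 4 → k, eval a g₁ = a 0 - a 1 ^ 2 := fun a => by simp [g₁]
  have hg₂ : ∀ a : Fin 4 → k, eval a g₂ = a 1 ^ 2 + a 2 ^ 2 - a 3 ^ 3 :=
    fun a => by simp [g₂]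
  have hp₁ : ∀ (a : Fin 4 → k) (l : Fin 4), eval a (pderiv l g₁) =
      if l = 0 then 1 else if l = 1 then -(2 * a 1) else 0 := by
    intro a l
    fin_cases l <;> simp [g₁, pderiv_X] <;> ring
  have hp₂ : ∀ (a : Fin 4 → k) (l : Fin 4), eval a (pderiv l g₂) =
      if l = 1 then 2 * a 1 else if l = 2 then 2 * a 2 else
        if l = 3 then -(3 * a 3 ^ 2) else 0 := by
    intro a l
    fin_cases l <;> simp [g₂, pderiv_X] <;> ring
  refine ⟨?_, ⟨?_, ?_, ?_⟩, ?_⟩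
  · ext a
    simp only [Set.mem_inter_iff, Set.mem_setOf_eq, X₁, hg₁, hg₂]
    constructor
    · rintro ⟨⟨h0, h1⟩, _, h3⟩
      refine ⟨h0, h1, ?_⟩
      rw [h1] at h3; linear_combination h3
    · rintro ⟨h0, h1, h2⟩
      exact ⟨⟨h0, h1⟩, by linear_combination h0 - a 1 * h1, by linear_combination a 1 * h1 + h2⟩
  · simp [X₁, hg₁, hg₂]
  · simp
  · intro i; fin_cases i <;> simp [pderiv_X]
  · ext a
    simp only [Set.mem_setOf_eq, Set.mem_singleton_iff, X₁, hg₁, hg₂, hp₁, hp₂]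
    constructor
    · rintro ⟨⟨h1, h2⟩, hm⟩
      have e1 := hm 0 1
      have e2 := hm 0 2
      have e3 := hm 0 3
      simp only [Fin.reduceEq, reduceIte] at e1 e2 e3
      norm_num at e1 e2 e3
      have ha1 : a 1 = 0 := e1
      have ha2 : a 2 = 0 := e2
      have ha3 : a 3 = 0 := e3
      have ha0 : a 0 = 0 := by rw [ha1] at h1; linear_combination h1
      funext i
      fin_cases i <;> simp [ha0, ha1, ha2, ha3]
    · rintro rfl
      refine ⟨⟨by norm_num, by norm_num⟩, ?_⟩
      intro l l'
      fin_cases l <;> fin_cases l' <;> norm_num
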